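/- arXiv:0708.3357 — 6 statements merged into one kernel-verified Lean document; each statement's English description precedes it below -/
import Mathlib

section
/- For every equivariant pair (ρ,τ), the function z ↦ B(z) = ν + μ(|(∂τ/∂z)(z)|² − |(∂τ/∂z̄)(z)|²) is constant on ℂ. -/
noncomputable section

open Complex

/-- The group `G = 𝕋 ⋉ ℂ`, with elements `[a,b]`, acting on `ℂ` by `z ↦ a z + b`. -/
@[ext]
structure GT : Type where
  a : Circle
  b : ℂ

namespace GT

instance : Group GT where
  mul g h := ⟨g.a * h.a, (g.a : ℂ) * h.b + g.b⟩
  one := ⟨1, 0⟩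
  inv g := ⟨g.a⁻¹, -((g.a⁻¹ : ℂ) * g.b)⟩
  mul_assoc g h k := by
    refine GT.ext (mul_assoc _ _ _) ?_
    show ((g.a * h.a : Circle) : ℂ) * k.b + ((g.a : ℂ) * h.b + g.b)
        = (g.a : ℂ) * ((h.a : ℂ) * k.b + h.b) + g.b
    push_cast; ring
  one_mul g := by
    refine GT.ext (one_mul _) ?_
    show ((1 : Circle) : ℂ) * g.b + 0 = g.b
    simp
  mul_one g := by
    refine GT.ext (mul_one _) ?_
    show (g.a : ℂ) * 0 + g.b = g.b
    simp
  inv_mul_cancel g := by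
    refine GT.ext (inv_mul_cancel _) ?_
    show ((g.a⁻¹ : Circle) : ℂ) * g.b + -(((g.a : ℂ))⁻¹ * g.b) = 0
    push_cast; ring

/-- The action of `G` on `ℂ` : `[a,b]·z = a z + b`. -/
def act (g : GT) (z : ℂ) : ℂ := (g.a : ℂ) * z + g.b

end GT

/-- The Hermitian product `⟨z,w⟩ = z·conj w`. -/
def herm (z w : ℂ) : ℂ := z * (starRingEnd ℂ) w

/-- The automorphic factor `j^α(g,z) = exp(2 i α Im⟨z, g⁻¹·0⟩)`. -/
def jfac (α : ℝ) (g : GT) (z : ℂ) : ℂ :=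
  Complex.exp (2 * Complex.I * (α : ℂ) * ((herm z (GT.act g⁻¹ 0)).im : ℂ))

/-- The Wirtinger derivative `∂f/∂z = (1/2)(∂f/∂x − i ∂f/∂y)`. -/
def wderiv (f : ℂ → ℂ) (z : ℂ) : ℂ :=
  (1 / 2 : ℂ) * (fderiv ℝ f z 1 - Complex.I * fderiv ℝ f z Complex.I)

/-- The anti-Wirtinger derivative `∂f/∂z̄ = (1/2)(∂f/∂x + i ∂f/∂y)`. -/
def wderivBar (f : ℂ → ℂ) (z : ℂ) : ℂ :=
  (1 / 2 : ℂ) * (fderiv ℝ f z 1 + Complex.I * fderiv ℝ f z Complex.I)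

/-- The Euclidean Laplacian `Δ = 4 ∂²/∂z∂z̄`. -/
def lap (f : ℂ → ℂ) (z : ℂ) : ℂ := 4 * wderiv (fun w => wderivBar f w) z

/-- `S(z) = ν z + μ (τ(z)·∂τ̄/∂z̄(z) − τ̄(z)·∂τ/∂z̄(z))`. -/
def Sfun (ν μ : ℝ) (τ : ℂ → ℂ) (z : ℂ) : ℂ :=
  (ν : ℂ) * z + (μ : ℂ) *
    (τ z * wderivBar (fun w => (starRingEnd ℂ) (τ w)) z - (starRingEnd ℂ) (τ z) * wderivBar τ z)

/-- `B(z) = ν + μ(|∂τ/∂z(z)|² − |∂τ/∂z̄(z)|²)`. -/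
def Bfun (ν μ : ℝ) (τ : ℂ → ℂ) (z : ℂ) : ℝ :=
  ν + μ * (‖wderiv τ z‖ ^ 2 - ‖wderivBar τ z‖ ^ 2)

/-- The magnetic Schrödinger operator `L`. -/
def Lop (ν μ : ℝ) (τ : ℂ → ℂ) (f : ℂ → ℂ) (z : ℂ) : ℂ :=
  - wderiv (fun w => wderivBar f w) z
    - (Sfun ν μ τ z * wderiv f z - (starRingEnd ℂ) (Sfun ν μ τ z) * wderivBar f z)
    + ((‖Sfun ν μ τ z‖ : ℂ)) ^ 2 * f z
    - ((μ : ℂ) / 4) *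
        (τ z * lap (fun w => (starRingEnd ℂ) (τ w)) z - (starRingEnd ℂ) (τ z) * lap τ z) * f z

/-- The annihilation operator `A f = ∂f/∂z̄ + S f`. -/
def Aop (ν μ : ℝ) (τ : ℂ → ℂ) (f : ℂ → ℂ) (z : ℂ) : ℂ :=
  wderivBar f z + Sfun ν μ τ z * f z

/-- The creation operator `Ã f = −∂f/∂z + conj(S) f`. -/
def Atop (ν μ : ℝ) (τ : ℂ → ℂ) (f : ℂ → ℂ) (z : ℂ) : ℂ :=
  - wderiv f z + (starRingEnd ℂ) (Sfun ν μ τ z) * f z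

/-- `J(g,z) = j^ν(g,z)·j^μ(ρ(g),τ(z))`. -/
def Jfun (ν μ : ℝ) (ρ : GT → GT) (τ : ℂ → ℂ) (g : GT) (z : ℂ) : ℂ :=
  jfac ν g z * jfac μ (ρ g) (τ z)

/-- `φ_ρ(g,g') = Im(ν⟨g⁻¹·0,g'·0⟩ + μ⟨ρ(g⁻¹)·0, ρ(g')·0⟩)`. -/
def phiRho (ν μ : ℝ) (ρ : GT → GT) (g g' : GT) : ℝ :=
  ((ν : ℂ) * herm (GT.act g⁻¹ 0) (GT.act g' 0)
    + (μ : ℂ) * herm (GT.act (ρ g⁻¹) 0) (GT.act (ρ g') 0)).im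

/-- Membership in the lattice `Γ = ℤω₁ + ℤω₂`. -/
def inLattice (ω₁ ω₂ : ℂ) (γ : ℂ) : Prop := ∃ m n : ℤ, γ = (m : ℂ) * ω₁ + (n : ℂ) * ω₂

/-- Mixed `Γ`-automorphic form of type `(ν,μ)` w.r.t. the pair `(ρ,τ)`. -/
def MixedForm (ν μ : ℝ) (ρ : GT → GT) (τ : ℂ → ℂ) (ω₁ ω₂ : ℂ) (F : ℂ → ℂ) : Prop :=
  ContDiff ℝ (⊤ : ℕ∞) F ∧ ∀ γ : ℂ, inLattice ω₁ ω₂ γ → ∀ z : ℂ,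
    F (z + γ) = jfac (-ν) ⟨(1 : Circle), γ⟩ z * jfac (-μ) (ρ ⟨(1 : Circle), γ⟩) (τ z) * F z

/-- The Laguerre polynomial `L_k`. -/
def laguerre (k : ℕ) (x : ℝ) : ℝ :=
  ∑ j ∈ Finset.range (k + 1), (-1) ^ j * (k.choose j : ℝ) * x ^ j / (Nat.factorial j : ℝ)


/-- The multiplier `χ_τ(γ) = exp(iφ(γ) − 2iμ Im⟨τ(0), ρ([1,γ])⁻¹·0⟩)`. -/
def chiTau (μ : ℝ) (ρ : GT → GT) (τ : ℂ → ℂ) (φ : ℂ → ℝ) (γ : ℂ) : ℂ :=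
  Complex.exp (Complex.I * (φ γ : ℂ)
    - 2 * Complex.I * (μ : ℂ) * ((herm (τ 0) (GT.act (ρ ⟨1, γ⟩)⁻¹ 0)).im : ℂ))

/-- The eigenprojector kernel `K_k`. -/
def Kker (B : ℝ) (φ : ℂ → ℝ) (k : ℕ) (z w : ℂ) : ℂ :=
  ((2 * B / Real.pi : ℝ) : ℂ) * Complex.exp (-Complex.I * ((φ z - φ w : ℝ) : ℂ)) *
    Complex.exp (2 * Complex.I * (B : ℂ) * ((herm z w).im : ℂ)) *
    Complex.exp (-((B * ‖z - w‖ ^ 2 : ℝ) : ℂ)) *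
    ((laguerre k (2 * B * ‖z - w‖ ^ 2) : ℝ) : ℂ)

/-- The kernel `K^σ_ξ;k`. -/
def Kxi (σ : ℝ) (ξ : ℂ) (k : ℕ) (z w : ℂ) : ℂ :=
  ((2 * σ / Real.pi : ℝ) : ℂ) * Complex.exp (2 * Complex.I * ((herm (z - w) ξ).im : ℂ)) *
    Complex.exp (2 * Complex.I * (σ : ℂ) * ((herm z w).im : ℂ)) *
    Complex.exp (-((σ * ‖z - w‖ ^ 2 : ℝ) : ℂ)) *
    ((laguerre k (2 * σ * ‖z - w‖ ^ 2) : ℝ) : ℂ)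

/-- `m`-fold iterate of the creation operator `Ã`. -/
def AtopIter (ν μ : ℝ) (τ : ℂ → ℂ) (m : ℕ) (f : ℂ → ℂ) : ℂ → ℂ :=
  (fun u z => Atop ν μ τ u z)^[m] f


lemma fderiv_shift (f : ℂ → ℂ) (γ z : ℂ) (hf : DifferentiableAt ℝ f (z + γ)) :
    fderiv ℝ (fun u => f (u + γ)) z = fderiv ℝ f (z + γ) := by
  have h := (hf.hasFDerivAt.comp z ((hasFDerivAt_id z).add_const γ)).fderiv
  simpa [Function.comp_def] using h

lemma wderiv_shift (f : ℂ → ℂ) (γ z : ℂ) (hf : DifferentiableAt ℝ f (z + γ)) :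
    wderiv (fun u => f (u + γ)) z = wderiv f (z + γ) := by
  unfold wderiv
  rw [fderiv_shift f γ z hf]

lemma wderivBar_shift (f : ℂ → ℂ) (γ z : ℂ) (hf : DifferentiableAt ℝ f (z + γ)) :
    wderivBar (fun u => f (u + γ)) z = wderivBar f (z + γ) := by
  unfold wderivBar
  rw [fderiv_shift f γ z hf]

lemma wderiv_affine (f : ℂ → ℂ) (hf : Differentiable ℝ f) (a b z : ℂ) :
    wderiv (fun u => a * f u + b) z = a * wderiv f z := by
  unfold wderiv
  have h : fderiv ℝ (fun u => a * f u + b) z = a • fderiv ℝ f z := by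
    rw [fderiv_add_const, fderiv_const_mul (hf z)]
  rw [h]; simp [smul_eq_mul]; ring

lemma wderivBar_affine (f : ℂ → ℂ) (hf : Differentiable ℝ f) (a b z : ℂ) :
    wderivBar (fun u => a * f u + b) z = a * wderivBar f z := by
  unfold wderivBar
  have h : fderiv ℝ (fun u => a * f u + b) z = a • fderiv ℝ f z := by
    rw [fderiv_add_const, fderiv_const_mul (hf z)]
  rw [h]; simp [smul_eq_mul]; ring

theorem statement0 (ν μ : ℝ) (hν : 0 < ν) (hμ : 0 < μ)
    (ρ : GT →* GT) (τ : ℂ → ℂ) (hτ : ContDiff ℝ (⊤ : ℕ∞) τ)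
    (hequiv : ∀ (g : GT) (z : ℂ), τ (GT.act g z) = GT.act (ρ g) (τ z)) :
    ∀ z w : ℂ, Bfun ν μ τ z = Bfun ν μ τ w := by
  intro z w
  have hd : Differentiable ℝ τ := hτ.differentiable (by simp)
  set g : GT := ⟨1, w - z⟩ with hg
  have h : ∀ u : ℂ, τ (u + (w - z)) = ((ρ g).a : ℂ) * τ u + (ρ g).b := by
    intro u
    have := hequiv g u
    simpa [GT.act, hg] using this
  have hfun : (fun u => τ (u + (w - z))) = fun u => ((ρ g).a : ℂ) * τ u + (ρ g).b :=
    funext h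
  have e1 : wderiv τ w = ((ρ g).a : ℂ) * wderiv τ z := by
    conv_lhs => rw [show w = z + (w - z) by ring]
    rw [← wderiv_shift τ (w - z) z (hd _), hfun, wderiv_affine τ hd]
  have e2 : wderivBar τ w = ((ρ g).a : ℂ) * wderivBar τ z := by
    conv_lhs => rw [show w = z + (w - z) by ring]
    rw [← wderivBar_shift τ (w - z) z (hd _), hfun, wderivBar_affine τ hd]
  simp [Bfun, e1, e2, map_mul, Circle.norm_coe]
end
end

section
/- Let ν, μ be reals and τ : ℂ → ℂ a C^∞ map. Define the first-order operators (Af)(z) = (∂f/∂z̄)(z) + S(z)f(z) and (Ãf)(z) = −(∂f/∂z)(z) + conj(S(z))f(z). Then for every C^∞ function f : ℂ → ℂ and every z ∈ ℂ one has the supersymmetric relations (Ã(Af))(z) + B(z)f(z) = (Lf)(z) and (A(Ãf))(z) − B(z)f(z) = (Lf)(z). -/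
noncomputable section

open Complex

private lemma wd_add {f g : ℂ → ℂ} {z : ℂ} (hf : DifferentiableAt ℝ f z)
    (hg : DifferentiableAt ℝ g z) :
    wderiv (fun w => f w + g w) z = wderiv f z + wderiv g z := by
  simp only [wderiv, fderiv_fun_add hf hg, ContinuousLinearMap.add_apply]
  ring

private lemma wdb_add {f g : ℂ → ℂ} {z : ℂ} (hf : DifferentiableAt ℝ f z)
    (hg : DifferentiableAt ℝ g z) :
    wderivBar (fun w => f w + g w) z = wderivBar f z + wderivBar g z := by
  simp only [wderivBar, fderiv_fun_add hf hg, ContinuousLinearMap.add_apply]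
  ring

private lemma wd_mul {f g : ℂ → ℂ} {z : ℂ} (hf : DifferentiableAt ℝ f z)
    (hg : DifferentiableAt ℝ g z) :
    wderiv (fun w => f w * g w) z = f z * wderiv g z + g z * wderiv f z := by
  simp only [wderiv, fderiv_fun_mul hf hg, ContinuousLinearMap.add_apply,
    ContinuousLinearMap.smul_apply, smul_eq_mul]
  ring

private lemma wdb_mul {f g : ℂ → ℂ} {z : ℂ} (hf : DifferentiableAt ℝ f z)
    (hg : DifferentiableAt ℝ g z) :
    wderivBar (fun w => f w * g w) z = f z * wderivBar g z + g z * wderivBar f z := by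
  simp only [wderivBar, fderiv_fun_mul hf hg, ContinuousLinearMap.add_apply,
    ContinuousLinearMap.smul_apply, smul_eq_mul]
  ring

private lemma wd_sub {f g : ℂ → ℂ} {z : ℂ} (hf : DifferentiableAt ℝ f z)
    (hg : DifferentiableAt ℝ g z) :
    wderiv (fun w => f w - g w) z = wderiv f z - wderiv g z := by
  simp only [wderiv, fderiv_fun_sub hf hg, ContinuousLinearMap.sub_apply]
  ring

private lemma wdb_neg {f : ℂ → ℂ} {z : ℂ} :
    wderivBar (fun w => -f w) z = - wderivBar f z := by
  simp only [wderivBar, fderiv_fun_neg, ContinuousLinearMap.neg_apply]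
  ring

private lemma wd_const {c z : ℂ} : wderiv (fun _ => c) z = 0 := by
  simp [wderiv]

private lemma wdb_const {c z : ℂ} : wderivBar (fun _ => c) z = 0 := by
  simp [wderivBar]

private lemma wd_id {z : ℂ} : wderiv (fun w => w) z = 1 := by
  simp [wderiv, fderiv_id']
  norm_num

private lemma fderiv_conj_apply (g : ℂ → ℂ) (z v : ℂ) :
    fderiv ℝ (fun w => (starRingEnd ℂ) (g w)) z v = (starRingEnd ℂ) (fderiv ℝ g z v) := by
  have h : (fun w => (starRingEnd ℂ) (g w)) = (Complex.conjLIE) ∘ g := rfl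
  rw [h, Complex.conjLIE.comp_fderiv]
  rfl

private lemma wd_conj (g : ℂ → ℂ) (z : ℂ) :
    wderiv (fun w => (starRingEnd ℂ) (g w)) z = (starRingEnd ℂ) (wderivBar g z) := by
  simp only [wderiv, wderivBar, fderiv_conj_apply, map_add, map_mul, map_sub, map_one,
    Complex.conj_I, map_div₀, map_ofNat]
  ring

private lemma wdb_conj (g : ℂ → ℂ) (z : ℂ) :
    wderivBar (fun w => (starRingEnd ℂ) (g w)) z = (starRingEnd ℂ) (wderiv g z) := by
  simp only [wderiv, wderivBar, fderiv_conj_apply, map_add, map_mul, map_sub, map_one,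
    Complex.conj_I, map_div₀, map_ofNat]
  ring

private lemma contDiff_wdb {g : ℂ → ℂ} (hg : ContDiff ℝ (⊤ : ℕ∞) g) :
    ContDiff ℝ (⊤ : ℕ∞) (fun w => wderivBar g w) := by
  have h1 : ContDiff ℝ (⊤ : ℕ∞) (fderiv ℝ g) := by
    apply hg.fderiv_right
    exact_mod_cast le_top
  exact contDiff_const.mul ((h1.clm_apply contDiff_const).add
    (contDiff_const.mul (h1.clm_apply contDiff_const)))

private lemma contDiff_conj {g : ℂ → ℂ} (hg : ContDiff ℝ (⊤ : ℕ∞) g) :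
    ContDiff ℝ (⊤ : ℕ∞) (fun w => (starRingEnd ℂ) (g w)) :=
  Complex.conjLIE.contDiff.comp hg

private lemma fderiv_fderiv_apply {g : ℂ → ℂ} (hg : ContDiff ℝ (⊤ : ℕ∞) g) (z u v : ℂ) :
    fderiv ℝ (fun w => fderiv ℝ g w v) z u = fderiv ℝ (fderiv ℝ g) z u v := by
  have h1 : ContDiff ℝ (⊤ : ℕ∞) (fderiv ℝ g) := by
    apply hg.fderiv_right; exact_mod_cast le_top
  rw [fderiv_clm_apply (h1.differentiable (by simp) z) (differentiableAt_const v)]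
  simp

private lemma wd2 {g : ℂ → ℂ} (hg : ContDiff ℝ (⊤ : ℕ∞) g) (z : ℂ) :
    wderiv (fun w => wderivBar g w) z
      = (1/4 : ℂ) * (fderiv ℝ (fderiv ℝ g) z 1 1
          + fderiv ℝ (fderiv ℝ g) z Complex.I Complex.I)
    ∧ wderivBar (fun w => wderiv g w) z
      = (1/4 : ℂ) * (fderiv ℝ (fderiv ℝ g) z 1 1
          + fderiv ℝ (fderiv ℝ g) z Complex.I Complex.I) := by
  have h1 : ContDiff ℝ (⊤ : ℕ∞) (fderiv ℝ g) := by
    apply hg.fderiv_right; exact_mod_cast le_top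
  have hd : ∀ v : ℂ, DifferentiableAt ℝ (fun w => fderiv ℝ g w v) z :=
    fun v => ((h1.clm_apply contDiff_const).differentiable (by simp) z :)
  have hsymm : fderiv ℝ (fderiv ℝ g) z 1 Complex.I = fderiv ℝ (fderiv ℝ g) z Complex.I 1 := by
    exact (hg.contDiffAt.isSymmSndFDerivAt (by
      simp only [minSmoothness_of_isRCLikeNormedField]; exact WithTop.coe_le_coe.mpr (le_top : (2 : ℕ∞) ≤ ⊤))).eq 1 Complex.I
  constructor
  · simp only [wderiv, wderivBar]
    rw [show (fun w => (1/2 : ℂ) * (fderiv ℝ g w 1 + Complex.I * fderiv ℝ g w Complex.I))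
        = fun w => (1/2 : ℂ) * ((fun w => fderiv ℝ g w 1) w
          + Complex.I * (fun w => fderiv ℝ g w Complex.I) w) from rfl]
    rw [fderiv_const_mul (((hd 1).fun_add ((hd Complex.I).const_mul _)) :) (1/2 : ℂ),
      fderiv_fun_add (hd 1) ((hd Complex.I).const_mul _),
      fderiv_const_mul (hd Complex.I) Complex.I]
    simp only [ContinuousLinearMap.smul_apply, ContinuousLinearMap.add_apply, smul_eq_mul,
      fderiv_fderiv_apply hg]
    rw [hsymm]
    ring_nf
    rw [Complex.I_sq]
    ring
  · simp only [wderiv, wderivBar]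
    rw [show (fun w => (1/2 : ℂ) * (fderiv ℝ g w 1 - Complex.I * fderiv ℝ g w Complex.I))
        = fun w => (1/2 : ℂ) * ((fun w => fderiv ℝ g w 1) w
          - Complex.I * (fun w => fderiv ℝ g w Complex.I) w) from rfl]
    rw [fderiv_const_mul (((hd 1).fun_sub ((hd Complex.I).const_mul _)) :) (1/2 : ℂ),
      fderiv_fun_sub (hd 1) ((hd Complex.I).const_mul _),
      fderiv_const_mul (hd Complex.I) Complex.I]
    simp only [ContinuousLinearMap.smul_apply, ContinuousLinearMap.sub_apply, smul_eq_mul,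
      fderiv_fderiv_apply hg]
    rw [hsymm]
    ring_nf
    rw [Complex.I_sq]
    ring

private lemma contDiff_wd {g : ℂ → ℂ} (hg : ContDiff ℝ (⊤ : ℕ∞) g) :
    ContDiff ℝ (⊤ : ℕ∞) (fun w => wderiv g w) := by
  have h1 : ContDiff ℝ (⊤ : ℕ∞) (fderiv ℝ g) := by
    apply hg.fderiv_right
    exact_mod_cast le_top
  exact contDiff_const.mul ((h1.clm_apply contDiff_const).sub
    (contDiff_const.mul (h1.clm_apply contDiff_const)))

private lemma sq_abs' (a : ℂ) : ((‖a‖ : ℝ) : ℂ)^2 = a * (starRingEnd ℂ) a := by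
  rw [← Complex.ofReal_pow, Complex.sq_norm, Complex.mul_conj]

theorem statement1 (ν μ : ℝ) (τ : ℂ → ℂ) (hτ : ContDiff ℝ (⊤ : ℕ∞) τ)
    (f : ℂ → ℂ) (hf : ContDiff ℝ (⊤ : ℕ∞) f) (z : ℂ) :
    Atop ν μ τ (fun w => Aop ν μ τ f w) z + (Bfun ν μ τ z : ℂ) * f z = Lop ν μ τ f z ∧
    Aop ν μ τ (fun w => Atop ν μ τ f w) z - (Bfun ν μ τ z : ℂ) * f z = Lop ν μ τ f z := by
  have hτb : ContDiff ℝ (⊤ : ℕ∞) (fun w => (starRingEnd ℂ) (τ w)) := contDiff_conj hτ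
  have hwbτ : ContDiff ℝ (⊤ : ℕ∞) (fun w => wderivBar τ w) := contDiff_wdb hτ
  have hwbτb : ContDiff ℝ (⊤ : ℕ∞)
      (fun w => wderivBar (fun u => (starRingEnd ℂ) (τ u)) w) := contDiff_wdb hτb
  have dAt : ∀ {g : ℂ → ℂ}, ContDiff ℝ (⊤ : ℕ∞) g → DifferentiableAt ℝ g z :=
    fun hg => hg.differentiable (by decide) z
  have hS : ContDiff ℝ (⊤ : ℕ∞) (fun w => Sfun ν μ τ w) := by
    simp only [Sfun]
    exact (contDiff_const.mul contDiff_id).add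
      (contDiff_const.mul ((hτ.mul hwbτb).sub (hτb.mul hwbτ)))
  have hSb : ContDiff ℝ (⊤ : ℕ∞) (fun w => (starRingEnd ℂ) (Sfun ν μ τ w)) :=
    contDiff_conj hS
  have dτ := dAt hτ
  have dτb := dAt hτb
  have dwbτ := dAt hwbτ
  have dwbτb := dAt hwbτb
  have df := dAt hf
  have dwbf := dAt (contDiff_wdb hf)
  have dwf := dAt (contDiff_wd hf)
  have dS := dAt hS
  have dSb := dAt hSb
  -- conjugation relation between the two second-order terms
  have hWconj : wderiv (fun w => wderivBar (fun u => (starRingEnd ℂ) (τ u)) w) z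
      = (starRingEnd ℂ) (wderiv (fun w => wderivBar τ w) z) := by
    have e1 : (fun w => wderivBar (fun u => (starRingEnd ℂ) (τ u)) w)
        = fun w => (starRingEnd ℂ) (wderiv τ w) := funext fun w => wdb_conj τ w
    rw [e1, wd_conj]
    congr 1
    rw [(wd2 hτ z).2, (wd2 hτ z).1]
  -- the Wirtinger derivative of S
  have hSd : wderiv (fun w => Sfun ν μ τ w) z
      = (Bfun ν μ τ z : ℂ)
        + (μ : ℂ) * (τ z * wderiv (fun w => wderivBar (fun u => (starRingEnd ℂ) (τ u)) w) z
            - (starRingEnd ℂ) (τ z) * wderiv (fun w => wderivBar τ w) z) := by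
    simp only [Sfun]
    rw [wd_add (f := fun w => (ν : ℂ) * w)
        (g := fun w => (μ : ℂ) * (τ w * wderivBar (fun u => (starRingEnd ℂ) (τ u)) w
          - (starRingEnd ℂ) (τ w) * wderivBar τ w))
        (differentiableAt_fun_id.const_mul _)
        (((dτ.mul dwbτb).sub (dτb.mul dwbτ)).const_mul _),
      wd_mul (f := fun _ => (ν : ℂ)) (g := fun w => w)
        (differentiableAt_const _) differentiableAt_fun_id,
      wd_const, wd_id,
      wd_mul (f := fun _ => (μ : ℂ))
        (g := fun w => τ w * wderivBar (fun u => (starRingEnd ℂ) (τ u)) w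
          - (starRingEnd ℂ) (τ w) * wderivBar τ w)
        (differentiableAt_const _) ((dτ.mul dwbτb).sub (dτb.mul dwbτ)),
      wd_const,
      wd_sub (dτ.fun_mul dwbτb) (dτb.fun_mul dwbτ),
      wd_mul (f := τ) (g := fun w => wderivBar (fun u => (starRingEnd ℂ) (τ u)) w) dτ dwbτb,
      wd_mul (f := fun w => (starRingEnd ℂ) (τ w)) (g := fun w => wderivBar τ w) dτb dwbτ,
      wdb_conj, wd_conj]
    rw [Bfun]
    push_cast
    rw [sq_abs', sq_abs']
    ring
  constructor
  · simp only [Atop, Aop, Lop, lap]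
    rw [wd_add (f := fun w => wderivBar f w) (g := fun w => Sfun ν μ τ w * f w)
        dwbf (dS.mul df),
      wd_mul (f := fun w => Sfun ν μ τ w) (g := f) dS df,
      hSd, sq_abs' (Sfun ν μ τ z)]
    ring
  · simp only [Atop, Aop, Lop, lap]
    rw [wdb_add (f := fun w => -wderiv f w) (g := fun w => (starRingEnd ℂ) (Sfun ν μ τ w) * f w)
        dwf.neg (dSb.mul df),
      wdb_neg (f := fun w => wderiv f w),
      wdb_mul (f := fun w => (starRingEnd ℂ) (Sfun ν μ τ w)) (g := f) dSb df,
      (wd2 hf z).2, ← (wd2 hf z).1,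
      wdb_conj (fun w => Sfun ν μ τ w), hSd, hWconj]
    simp only [map_add, map_mul, map_sub, Complex.conj_conj, Complex.conj_ofReal]
    rw [sq_abs' (Sfun ν μ τ z)]
    ring
end
end

section
/- For every equivariant pair (ρ,τ) there exists a C^∞ function φ : ℂ → ℝ with φ(0) = 0 such that ∂φ/∂z̄(z) = −i(S(z) − Bz) for all z ∈ ℂ, where B denotes the constant value of B(z); consequently, for every C^∞ f : ℂ → ℂ one has (Af)(z) = e^{−B|z|²−iφ(z)}·(∂/∂z̄)[w ↦ e^{B|w|²+iφ(w)}f(w)](z), where (Af)(z) = (∂f/∂z̄)(z) + S(z)f(z). -/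
noncomputable section

open Complex

/-! ### Auxiliary lemmas -/

lemma wbar_of_hasFDerivAt {f : ℂ → ℂ} {L : ℂ →L[ℝ] ℂ} {z : ℂ} (h : HasFDerivAt f L z) :
    wderivBar f z = (1 / 2 : ℂ) * (L 1 + Complex.I * L Complex.I) := by
  rw [wderivBar, h.fderiv]

lemma w_of_hasFDerivAt {f : ℂ → ℂ} {L : ℂ →L[ℝ] ℂ} {z : ℂ} (h : HasFDerivAt f L z) :
    wderiv f z = (1 / 2 : ℂ) * (L 1 - Complex.I * L Complex.I) := by
  rw [wderiv, h.fderiv]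

lemma affine_hasFDerivAt (c0 p q z : ℂ) :
    HasFDerivAt (fun w : ℂ => c0 + p * w + q * (starRingEnd ℂ) w)
      (p • ContinuousLinearMap.id ℝ ℂ + q • Complex.conjCLE.toContinuousLinearMap) z := by
  have h1 : HasFDerivAt (fun w : ℂ => c0 + p * w) (p • ContinuousLinearMap.id ℝ ℂ) z :=
    ((hasFDerivAt_id z).const_mul p).const_add c0
  have h2 : HasFDerivAt (fun w : ℂ => q * (starRingEnd ℂ) w)
      (q • Complex.conjCLE.toContinuousLinearMap) z :=
    (Complex.conjCLE.toContinuousLinearMap.hasFDerivAt).const_mul q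
  exact h1.add h2

lemma myWbar (c0 p q z : ℂ) :
    wderivBar (fun w => c0 + p * w + q * (starRingEnd ℂ) w) z = q := by
  rw [wbar_of_hasFDerivAt (affine_hasFDerivAt c0 p q z)]
  simp only [ContinuousLinearMap.add_apply, ContinuousLinearMap.smul_apply,
    ContinuousLinearMap.id_apply, ContinuousLinearEquiv.coe_coe, Complex.conjCLE_apply,
    map_one, Complex.conj_I, smul_eq_mul]
  linear_combination (p / 2 - q / 2) * Complex.I_sq

lemma myW (c0 p q z : ℂ) :
    wderiv (fun w => c0 + p * w + q * (starRingEnd ℂ) w) z = p := by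
  rw [w_of_hasFDerivAt (affine_hasFDerivAt c0 p q z)]
  simp only [ContinuousLinearMap.add_apply, ContinuousLinearMap.smul_apply,
    ContinuousLinearMap.id_apply, ContinuousLinearEquiv.coe_coe, Complex.conjCLE_apply,
    map_one, Complex.conj_I, smul_eq_mul]
  linear_combination (q / 2 - p / 2) * Complex.I_sq

lemma tau_affine (ρ : GT →* GT) (τ : ℂ → ℂ) (hτ : ContDiff ℝ (⊤ : ℕ∞) τ)
    (hequiv : ∀ (g : GT) (z : ℂ), τ (GT.act g z) = GT.act (ρ g) (τ z)) :
    ∃ p q : ℂ, ∀ z, τ z = τ 0 + p * z + q * (starRingEnd ℂ) z := by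
  have hdiff : Differentiable ℝ τ := hτ.differentiable (by simp)
  -- derivative transformation rule
  have hfd : ∀ z : ℂ, fderiv ℝ τ z = (((ρ ⟨1, z⟩).a : ℂ)) • fderiv ℝ τ 0 := by
    intro z
    have h1 : HasFDerivAt (fun w => τ (w + z)) (fderiv ℝ τ z) 0 := by
      have := ((hdiff (0 + z)).hasFDerivAt).comp 0 ((hasFDerivAt_id (0 : ℂ)).add_const z)
      simpa [Function.comp_def] using this
    have h2 : HasFDerivAt (fun w => ((ρ ⟨1, z⟩).a : ℂ) * τ w + (ρ ⟨1, z⟩).b)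
        (((ρ ⟨1, z⟩).a : ℂ) • fderiv ℝ τ 0) 0 :=
      ((hdiff 0).hasFDerivAt.const_mul _).add_const _
    have hfun : (fun w => τ (w + z)) = fun w => ((ρ ⟨1, z⟩).a : ℂ) * τ w + (ρ ⟨1, z⟩).b := by
      funext w
      have h := hequiv ⟨1, z⟩ w
      simpa [GT.act] using h
    rw [hfun] at h1
    exact h1.unique h2
  -- the circle part squares to one
  have haa : ∀ z : ℂ, ((ρ ⟨1, z⟩).a : ℂ) * ((ρ ⟨1, z⟩).a : ℂ) = 1 := by
    intro z
    set c : Circle := ⟨(-1 : ℂ), by show (-1:ℂ) ∈ Metric.sphere 0 1; simp⟩ with hc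
    have hneg : (⟨1, -z⟩ : GT) * ⟨1, z⟩ = 1 := by
      refine GT.ext ?_ ?_
      · show (1 : Circle) * 1 = 1; simp
      · show ((1 : Circle) : ℂ) * z + (-z) = 0; simp
    have hconj : (⟨c, 0⟩ : GT) * ⟨1, z⟩ * (⟨c, 0⟩ : GT)⁻¹ = ⟨1, -z⟩ := by
      refine GT.ext ?_ ?_
      · show c * 1 * c⁻¹ = 1; simp
      · show ((c * 1 : Circle) : ℂ) * (-(((c⁻¹ : Circle) : ℂ) * (0:ℂ))) + (((c : ℂ)) * z + 0) = -z
        have hcv : (c : ℂ) = -1 := rfl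
        simp [hcv]
    have e1 : (ρ ⟨1, -z⟩).a * (ρ ⟨1, z⟩).a = 1 := by
      have := congrArg GT.a (congrArg ρ hneg)
      rw [map_mul, map_one] at this
      exact this
    have e2 : (ρ ⟨1, -z⟩).a = (ρ ⟨1, z⟩).a := by
      have := congrArg GT.a (congrArg ρ hconj.symm)
      rw [map_mul, map_mul, map_inv] at this
      have h3 : (ρ ⟨1, -z⟩).a = (ρ ⟨c,0⟩).a * (ρ ⟨1, z⟩).a * ((ρ ⟨c,0⟩).a)⁻¹ := this
      rw [h3, mul_comm ((ρ ⟨c,0⟩).a), mul_assoc, mul_inv_cancel, mul_one]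
    rw [e2] at e1
    calc ((ρ ⟨1, z⟩).a : ℂ) * ((ρ ⟨1, z⟩).a : ℂ) = (((ρ ⟨1, z⟩).a * (ρ ⟨1, z⟩).a : Circle) : ℂ) := by
            rw [Circle.coe_mul]
      _ = 1 := by rw [e1]; rfl
  by_cases h0 : fderiv ℝ τ 0 = 0
  · -- τ is constant
    have hz : ∀ z, fderiv ℝ τ z = 0 := fun z => by rw [hfd z, h0, smul_zero]
    refine ⟨0, 0, fun z => ?_⟩
    have := is_const_of_fderiv_eq_zero hdiff hz z 0
    simpa using this
  · -- the multiplier is continuous, hence everywhere 1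
    obtain ⟨v, hv⟩ : ∃ v, fderiv ℝ τ 0 v ≠ 0 := by
      by_contra h
      push_neg at h
      exact h0 (ContinuousLinearMap.ext h)
    have hAeq : (fun z => ((ρ ⟨1, z⟩).a : ℂ)) = fun z => fderiv ℝ τ z v / fderiv ℝ τ 0 v := by
      funext z
      rw [hfd z]
      field_simp [ContinuousLinearMap.smul_apply]
      rw [ContinuousLinearMap.smul_apply, smul_eq_mul]
    have hAcont : Continuous (fun z => ((ρ ⟨1, z⟩).a : ℂ)) := by
      rw [hAeq]
      exact ((hτ.continuous_fderiv (by simp)).clm_apply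
        continuous_const).div_const _
    have hA0 : ((ρ ⟨1, (0:ℂ)⟩).a : ℂ) = 1 := by
      have h1 : (⟨1, (0:ℂ)⟩ : GT) = 1 := rfl
      rw [h1, map_one]
      rfl
    have huniv : {z : ℂ | ((ρ ⟨1, z⟩).a : ℂ) = 1} = Set.univ := by
      apply IsClopen.eq_univ
      · constructor
        · exact isClosed_singleton.preimage hAcont
        · have : {z : ℂ | ((ρ ⟨1, z⟩).a : ℂ) = 1} =
              (fun z => ((ρ ⟨1, z⟩).a : ℂ)) ⁻¹' ({-1}ᶜ) := by
            ext z
            simp only [Set.mem_setOf_eq, Set.mem_preimage, Set.mem_compl_iff,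
              Set.mem_singleton_iff]
            constructor
            · intro h hm
              rw [hm] at h
              norm_num at h
            · intro h
              rcases mul_self_eq_one_iff.mp (haa z) with h1 | h1
              · exact h1
              · exact absurd h1 h
          rw [this]
          exact (isOpen_compl_singleton).preimage hAcont
      · exact ⟨0, hA0⟩
    have hA1 : ∀ z : ℂ, ((ρ ⟨1, z⟩).a : ℂ) = 1 := fun z => by
      have : z ∈ {z : ℂ | ((ρ ⟨1, z⟩).a : ℂ) = 1} := huniv ▸ Set.mem_univ z
      exact this
    set L := fderiv ℝ τ 0 with hL
    have hfdc : ∀ z, fderiv ℝ τ z = L := fun z => by rw [hfd z, hA1 z, one_smul]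
    have haff : ∀ z, τ z = τ 0 + L z := by
      intro z
      have hd2 : Differentiable ℝ (fun w => τ w - L w) := hdiff.sub L.differentiable
      have hz2 : ∀ w, fderiv ℝ (fun w => τ w - L w) w = 0 := by
        intro w
        rw [fderiv_fun_sub (hdiff w) (L.differentiable w),
          L.fderiv, hfdc w]
        simp
      have := is_const_of_fderiv_eq_zero hd2 hz2 z 0
      rw [map_zero, sub_zero] at this
      linear_combination this
    refine ⟨(1/2) * (L 1 - Complex.I * L Complex.I), (1/2) * (L 1 + Complex.I * L Complex.I),
      fun z => ?_⟩
    rw [haff z]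
    have hz : L z = (z.re : ℂ) * L 1 + (z.im : ℂ) * L Complex.I := by
      have h1 : z = (z.re : ℝ) • (1:ℂ) + (z.im : ℝ) • Complex.I := by
        simp [Complex.real_smul, Complex.re_add_im]
      calc L z = L ((z.re : ℝ) • (1:ℂ) + (z.im : ℝ) • Complex.I) := by rw [← h1]
        _ = (z.re : ℝ) • L 1 + (z.im : ℝ) • L Complex.I := by rw [map_add, map_smul, map_smul]
        _ = (z.re : ℂ) * L 1 + (z.im : ℂ) * L Complex.I := by
            simp [Complex.real_smul]
    have hconjz : (starRingEnd ℂ) z = (z.re : ℂ) - (z.im : ℂ) * Complex.I := by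
      apply Complex.ext <;> simp
    have h1 : z = (z.re : ℂ) + (z.im : ℂ) * Complex.I := (Complex.re_add_im z).symm
    rw [hz, hconjz]
    linear_combination (-(1/2) * (L 1 - Complex.I * L Complex.I)) * h1 +
      ((z.im : ℂ) * L Complex.I) * Complex.I_sq

lemma cabs_sq (w : ℂ) : ((‖w‖ : ℝ) : ℂ) ^ 2 = w * (starRingEnd ℂ) w := by
  calc ((‖w‖ : ℝ) : ℂ) ^ 2 = ((‖w‖ ^ 2 : ℝ) : ℂ) := by push_cast; ring
    _ = ((Complex.normSq w : ℝ) : ℂ) := by rw [Complex.sq_norm]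
    _ = w * (starRingEnd ℂ) w := (Complex.mul_conj w).symm

theorem statement2 (ν μ : ℝ) (hν : 0 < ν) (hμ : 0 < μ)
    (ρ : GT →* GT) (τ : ℂ → ℂ) (hτ : ContDiff ℝ (⊤ : ℕ∞) τ)
    (hequiv : ∀ (g : GT) (z : ℂ), τ (GT.act g z) = GT.act (ρ g) (τ z))
    (B : ℝ) (hB : ∀ z : ℂ, Bfun ν μ τ z = B) :
    ∃ φ : ℂ → ℝ, ContDiff ℝ (⊤ : ℕ∞) φ ∧ φ 0 = 0 ∧
      (∀ z : ℂ, wderivBar (fun w => (φ w : ℂ)) z = -Complex.I * (Sfun ν μ τ z - (B : ℂ) * z)) ∧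
      (∀ f : ℂ → ℂ, ContDiff ℝ (⊤ : ℕ∞) f → ∀ z : ℂ,
        Aop ν μ τ f z =
          Complex.exp (-((B * ‖z‖ ^ 2 : ℝ) : ℂ) - Complex.I * (φ z : ℂ)) *
            wderivBar (fun w =>
              Complex.exp (((B * ‖w‖ ^ 2 : ℝ) : ℂ) + Complex.I * (φ w : ℂ)) * f w) z) := by
  obtain ⟨p, q, hrep⟩ := tau_affine ρ τ hτ hequiv
  have hτeq : τ = fun w => τ 0 + p * w + q * (starRingEnd ℂ) w := funext hrep
  have hWbar : ∀ z, wderivBar τ z = q := fun z => by rw [hτeq]; exact myWbar _ _ _ _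
  have hW : ∀ z, wderiv τ z = p := fun z => by rw [hτeq]; exact myW _ _ _ _
  have hWbarConj : ∀ z, wderivBar (fun w => (starRingEnd ℂ) (τ w)) z = (starRingEnd ℂ) p := by
    intro z
    have h : (fun w => (starRingEnd ℂ) (τ w)) = fun w =>
        (starRingEnd ℂ) (τ 0) + (starRingEnd ℂ) q * w + (starRingEnd ℂ) p * (starRingEnd ℂ) w := by
      funext w
      rw [hrep w]
      simp only [map_add, map_mul, Complex.conj_conj]
      ring
    rw [h]
    exact myWbar _ _ _ _
  have hBC : (B : ℂ) = (ν : ℂ) + (μ : ℂ) * (p * (starRingEnd ℂ) p - q * (starRingEnd ℂ) q) := by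
    have hB0 := hB 0
    rw [Bfun, hW 0, hWbar 0] at hB0
    rw [← hB0]
    push_cast
    rw [cabs_sq, cabs_sq]
  set s0 : ℂ := (μ : ℂ) * (τ 0 * (starRingEnd ℂ) p - (starRingEnd ℂ) (τ 0) * q) with hs0
  have hS : ∀ z, Sfun ν μ τ z = (B : ℂ) * z + s0 := by
    intro z
    rw [Sfun, hWbarConj z, hWbar z, hrep z, hBC, hs0]
    simp only [map_add, map_mul, Complex.conj_conj]
    ring
  set k : ℂ := -Complex.I * s0 with hk
  have hφC : ∀ w : ℂ, ((2 * (k * (starRingEnd ℂ) w).re : ℝ) : ℂ)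
      = (0 : ℂ) + (starRingEnd ℂ) k * w + k * (starRingEnd ℂ) w := by
    intro w
    rw [← Complex.add_conj]
    simp only [map_mul, Complex.conj_conj]
    ring
  refine ⟨fun z => 2 * (k * (starRingEnd ℂ) z).re, ?_, by simp, ?_, ?_⟩
  · have h1 : ContDiff ℝ (⊤ : ℕ∞) (fun z : ℂ => k * (starRingEnd ℂ) z) :=
      contDiff_const.mul Complex.conjCLE.toContinuousLinearMap.contDiff
    exact contDiff_const.mul (Complex.reCLM.contDiff.comp h1)
  · intro z
    have h : (fun w => (((2 * (k * (starRingEnd ℂ) w).re : ℝ)) : ℂ))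
        = fun w => (0 : ℂ) + (starRingEnd ℂ) k * w + k * (starRingEnd ℂ) w := funext hφC
    rw [h, myWbar, hS z, hk]
    ring
  · intro f hf z
    have hfd := ((hf.differentiable (by simp)) z).hasFDerivAt
    have hGfun : (fun w => Complex.exp (((B * ‖w‖ ^ 2 : ℝ) : ℂ)
          + Complex.I * (((2 * (k * (starRingEnd ℂ) w).re : ℝ)) : ℂ)) * f w)
        = fun w => Complex.exp ((B : ℂ) * (w * (starRingEnd ℂ) w)
          + ((Complex.I * k) * (starRingEnd ℂ) w + (Complex.I * (starRingEnd ℂ) k) * w)) * f w := by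
      funext w
      congr 2
      rw [hφC w]
      push_cast
      rw [cabs_sq]
      ring
    have hC : HasFDerivAt (fun w : ℂ => (starRingEnd ℂ) w)
        (Complex.conjCLE.toContinuousLinearMap) z :=
      Complex.conjCLE.toContinuousLinearMap.hasFDerivAt
    have hmul : HasFDerivAt (fun w : ℂ => w * (starRingEnd ℂ) w)
        (z • Complex.conjCLE.toContinuousLinearMap
          + (starRingEnd ℂ) z • ContinuousLinearMap.id ℝ ℂ) z := (hasFDerivAt_id z).mul hC
    have h3 := hmul.const_mul ((B : ℂ))
    have h4 := hC.const_mul (Complex.I * k)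
    have h5 : HasFDerivAt (fun w : ℂ => Complex.I * (starRingEnd ℂ) k * w)
        ((Complex.I * (starRingEnd ℂ) k) • ContinuousLinearMap.id ℝ ℂ) z :=
      (hasFDerivAt_id (𝕜 := ℝ) z).const_mul _
    have hGe := h3.add (h4.add h5)
    have hexp := HasFDerivAt.cexp (𝕜 := ℝ) hGe
    have hprod := hexp.mul hfd
    simp only [Pi.add_apply] at hprod
    rw [Aop, hS z, wbar_of_hasFDerivAt hfd, hGfun, wbar_of_hasFDerivAt (f := fun w => Complex.exp ((B : ℂ) * (w * (starRingEnd ℂ) w)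
          + ((Complex.I * k) * (starRingEnd ℂ) w + (Complex.I * (starRingEnd ℂ) k) * w)) * f w) hprod]
    have hpre : Complex.exp (-((B * ‖z‖ ^ 2 : ℝ) : ℂ)
          - Complex.I * (((2 * (k * (starRingEnd ℂ) z).re : ℝ)) : ℂ))
        = Complex.exp (-((B : ℂ) * (z * (starRingEnd ℂ) z)
          + ((Complex.I * k) * (starRingEnd ℂ) z + (Complex.I * (starRingEnd ℂ) k) * z))) := by
      congr 1
      rw [hφC z]
      push_cast
      rw [cabs_sq]
      ring
    rw [hpre, Complex.exp_neg]
    simp only [ContinuousLinearMap.add_apply, ContinuousLinearMap.smul_apply,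
      ContinuousLinearMap.id_apply, ContinuousLinearEquiv.coe_coe, Complex.conjCLE_apply,
      map_one, Complex.conj_I, smul_eq_mul]
    field_simp [Complex.exp_ne_zero]
    have e2 : (Complex.I) ^ 2 = -1 := Complex.I_sq
    have e3 : (Complex.I) ^ 3 = -Complex.I := by rw [pow_succ, e2]; ring
    have e4 : (Complex.I) ^ 4 = 1 := by
      rw [show (Complex.I) ^ 4 = ((Complex.I) ^ 2) ^ 2 by ring, e2]; norm_num
    ring_nf
    simp only [e2, e3, e4]
    rw [hk]
    linear_combination (2 * f z * s0) * e2
end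
end

section
/- For every α ∈ ℝ, all h, h' ∈ G and every w ∈ ℂ, the automorphic factor satisfies j^α(hh', w) = exp(2iα·Im⟨h⁻¹·0, h'·0⟩)·j^α(h, h'·w)·j^α(h', w). -/
noncomputable section

open Complex

lemma GTinv_a (g : GT) : (g⁻¹).a = g.a⁻¹ := rfl

lemma GTinv_b (g : GT) : (g⁻¹).b = -((g.a⁻¹ : ℂ) * g.b) := rfl

lemma GTmul_a (g h : GT) : (g * h).a = g.a * h.a := rfl

lemma GTmul_b (g h : GT) : (g * h).b = (g.a : ℂ) * h.b + g.b := rfl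

theorem statement5 (α : ℝ) (h h' : GT) (w : ℂ) :
    jfac α (h * h') w
      = Complex.exp (2 * Complex.I * (α : ℂ) * ((herm (GT.act h⁻¹ 0) (GT.act h' 0)).im : ℂ)) *
          jfac α h (GT.act h' w) * jfac α h' w := by
  obtain ⟨a, b⟩ := h
  obtain ⟨c, d⟩ := h'
  have ha : (a : ℂ) * (starRingEnd ℂ) (a : ℂ) = 1 := by
    rw [Complex.mul_conj, Circle.normSq_coe, Complex.ofReal_one]
  have hc : (c : ℂ) * (starRingEnd ℂ) (c : ℂ) = 1 := by
    rw [Complex.mul_conj, Circle.normSq_coe, Complex.ofReal_one]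
  have hainv : ((a : ℂ))⁻¹ = (starRingEnd ℂ) (a : ℂ) := inv_eq_of_mul_eq_one_right ha
  have hcinv : ((c : ℂ))⁻¹ = (starRingEnd ℂ) (c : ℂ) := inv_eq_of_mul_eq_one_right hc
  rw [jfac, jfac, jfac, ← Complex.exp_add, ← Complex.exp_add]
  congr 1
  have hz : herm w (GT.act ((⟨a, b⟩ : GT) * (⟨c, d⟩ : GT))⁻¹ 0)
      = herm (GT.act (⟨a, b⟩ : GT)⁻¹ 0) (GT.act (⟨c, d⟩ : GT) 0)
        + herm (GT.act (⟨c, d⟩ : GT) w) (GT.act (⟨a, b⟩ : GT)⁻¹ 0)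
        + herm w (GT.act (⟨c, d⟩ : GT)⁻¹ 0)
        + ((starRingEnd ℂ) (a : ℂ) * b * (starRingEnd ℂ) d
          + (starRingEnd ℂ) ((starRingEnd ℂ) (a : ℂ) * b * (starRingEnd ℂ) d)) := by
    simp only [herm, GT.act, GTinv_a, GTinv_b, GTmul_a, GTmul_b, Circle.coe_inv_eq_conj,
      Circle.coe_mul, mul_inv, hainv, hcinv, map_mul, map_add, map_neg, Complex.conj_conj,
      mul_zero, zero_add]
    linear_combination (-(w * (c : ℂ) * (starRingEnd ℂ) d)) * ha
  have him : (herm w (GT.act ((⟨a, b⟩ : GT) * (⟨c, d⟩ : GT))⁻¹ 0)).im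
      = (herm (GT.act (⟨a, b⟩ : GT)⁻¹ 0) (GT.act (⟨c, d⟩ : GT) 0)).im
        + (herm (GT.act (⟨c, d⟩ : GT) w) (GT.act (⟨a, b⟩ : GT)⁻¹ 0)).im
        + (herm w (GT.act (⟨c, d⟩ : GT)⁻¹ 0)).im := by
    rw [hz]
    simp only [Complex.add_im, Complex.conj_im]
    ring
  rw [him]
  push_cast
  ring
end
end

section
/- The space M^{ν,μ}_τ(ℂ) of mixed Γ-automorphic forms of type (ν,μ) contains a nonzero function if and only if (1/π)·φ_ρ(γ,γ') is an integer for all γ, γ' ∈ Γ. -/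
noncomputable section

open Complex

namespace Stmt6

open scoped commutatorElement

/-! ### Basic algebra in `GT` -/

lemma gt_mul_a (g h : GT) : (g * h).a = g.a * h.a := rfl
lemma gt_mul_b (g h : GT) : (g * h).b = (g.a : ℂ) * h.b + g.b := rfl
lemma gt_inv_a (g : GT) : (g⁻¹).a = g.a⁻¹ := rfl
lemma gt_inv_b (g : GT) : (g⁻¹).b = -((g.a⁻¹ : ℂ) * g.b) := rfl

/-- Projection onto the circle component, as a monoid hom. -/
def projA : GT →* Circle where
  toFun g := g.a
  map_one' := rfl
  map_mul' _ _ := rfl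

/-- `-1` as an element of the circle. -/
def cneg : Circle := ⟨-1, by norm_num [Submonoid.unitSphere, Metric.mem_sphere]⟩

lemma cneg_coe : (cneg : ℂ) = -1 := rfl

/-- Every translation `[1,b]` is a commutator in `G`. -/
lemma trans_eq_commutator (b : ℂ) :
    (⟨1, b⟩ : GT) = ⁅(⟨cneg, 0⟩ : GT), (⟨1, -b/2⟩ : GT)⁆ := by
  rw [commutatorElement_def]
  refine (GT.ext ?_ ?_).symm
  · show cneg * 1 * cneg⁻¹ * 1⁻¹ = 1
    group
  · show ((((⟨cneg, 0⟩ : GT) * ⟨1, -b/2⟩ * (⟨cneg, 0⟩ : GT)⁻¹) * (⟨1, -b/2⟩ : GT)⁻¹).b : ℂ) = b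
    simp only [gt_mul_b, gt_inv_b, gt_inv_a, gt_mul_a, Circle.coe_mul, Circle.coe_inv,
      Circle.coe_one, cneg_coe]
    ring

lemma chi_one (ρ : GT →* GT) (b : ℂ) : (ρ ⟨1, b⟩).a = 1 := by
  have h : (projA.comp ρ) (⟨1, b⟩ : GT) = 1 := by
    rw [trans_eq_commutator b, map_commutatorElement]
    exact commutatorElement_eq_one_iff_commute.mpr (Commute.all _ _)
  exact h

/-- The translation part of `ρ [1,b]`. -/
def psi (ρ : GT →* GT) (b : ℂ) : ℂ := (ρ ⟨1, b⟩).b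

lemma rho_trans (ρ : GT →* GT) (b : ℂ) : ρ ⟨1, b⟩ = ⟨1, psi ρ b⟩ :=
  GT.ext (chi_one ρ b) rfl

lemma trans_mul (γ γ' : ℂ) : (⟨1, γ⟩ : GT) * ⟨1, γ'⟩ = ⟨1, γ + γ'⟩ := by
  refine GT.ext ?_ ?_
  · show (1 : Circle) * 1 = 1; simp
  · show ((1 : Circle) : ℂ) * γ' + γ = γ + γ'
    simp [add_comm]

lemma psi_add (ρ : GT →* GT) (γ γ' : ℂ) : psi ρ (γ + γ') = psi ρ γ + psi ρ γ' := by
  have h : ρ (⟨1, γ + γ'⟩ : GT) = ρ ⟨1, γ⟩ * ρ ⟨1, γ'⟩ := by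
    rw [← map_mul, trans_mul]
  have h2 : psi ρ (γ + γ') = (ρ ⟨1, γ⟩ * ρ ⟨1, γ'⟩).b := congrArg GT.b h
  rw [h2, gt_mul_b, chi_one ρ γ]
  simp [psi, add_comm]

lemma psi_zero (ρ : GT →* GT) : psi ρ 0 = 0 := by
  have h := psi_add ρ 0 0
  simp only [add_zero] at h
  linear_combination -h

lemma tau_shift (ρ : GT →* GT) (τ : ℂ → ℂ)
    (hequiv : ∀ (g : GT) (z : ℂ), τ (GT.act g z) = GT.act (ρ g) (τ z))
    (b z : ℂ) : τ (z + b) = τ z + psi ρ b := by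
  have h := hequiv ⟨1, b⟩ z
  rw [rho_trans ρ b] at h
  simpa [GT.act, add_comm] using h

/-! ### The multiplier and its exponent -/

/-- Real pairing `e2 a b = Im (a * conj b)`. -/
def e2 (a b : ℂ) : ℝ := (a * (starRingEnd ℂ) b).im

lemma e2_add_left (a b c : ℂ) : e2 (a + b) c = e2 a c + e2 b c := by
  simp [e2, add_mul]

lemma e2_add_right (a b c : ℂ) : e2 a (b + c) = e2 a b + e2 a c := by
  simp [e2, map_add, mul_add]

lemma e2_zero_right (a : ℂ) : e2 a 0 = 0 := by simp [e2]

/-- Real exponent of the multiplier. -/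
def Sr (ν μ : ℝ) (ρ : GT →* GT) (τ : ℂ → ℂ) (b z : ℂ) : ℝ :=
  ν * e2 z b + μ * e2 (τ z) (psi ρ b)

/-- The multiplier `Em b z = j^{-ν}([1,b],z) · j^{-μ}(ρ[1,b], τ z)`. -/
def Em (ν μ : ℝ) (ρ : GT →* GT) (τ : ℂ → ℂ) (b z : ℂ) : ℂ :=
  jfac (-ν) ⟨1, b⟩ z * jfac (-μ) (ρ ⟨1, b⟩) (τ z)

lemma act_inv_trans (b : ℂ) : GT.act (⟨1, b⟩ : GT)⁻¹ 0 = -b := by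
  simp [GT.act, gt_inv_a, gt_inv_b]

lemma act_trans_zero (b : ℂ) : GT.act (⟨1, b⟩ : GT) 0 = b := by
  simp [GT.act]

lemma act_inv_rho (ρ : GT →* GT) (b : ℂ) :
    GT.act (ρ (⟨1, b⟩ : GT))⁻¹ 0 = -(psi ρ b) := by
  rw [rho_trans ρ b]; exact act_inv_trans _

lemma act_rho_zero (ρ : GT →* GT) (b : ℂ) :
    GT.act (ρ (⟨1, b⟩ : GT)) 0 = psi ρ b := by
  rw [rho_trans ρ b]; exact act_trans_zero _

lemma Em_eq (ν μ : ℝ) (ρ : GT →* GT) (τ : ℂ → ℂ) (b z : ℂ) :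
    Em ν μ ρ τ b z = Complex.exp (2 * Complex.I * ((Sr ν μ ρ τ b z : ℝ) : ℂ)) := by
  unfold Em jfac
  rw [act_inv_trans, act_inv_rho, ← Complex.exp_add]
  congr 1
  unfold herm Sr e2
  simp only [map_neg, mul_neg, neg_mul, Complex.neg_im, Complex.ofReal_neg,
    Complex.ofReal_add, Complex.ofReal_mul]
  ring

lemma phiRho_eq (ν μ : ℝ) (ρ : GT →* GT) (γ γ' : ℂ) :
    phiRho ν μ (⇑ρ) ⟨1, γ⟩ ⟨1, γ'⟩
      = -(ν * e2 γ γ' + μ * e2 (psi ρ γ) (psi ρ γ')) := by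
  unfold phiRho
  rw [map_inv, act_inv_trans, act_inv_rho, act_trans_zero, act_rho_zero]
  unfold herm e2
  simp only [neg_mul, mul_neg, Complex.neg_im, Complex.add_im, Complex.mul_im,
    Complex.mul_re, Complex.ofReal_re, Complex.ofReal_im]
  ring

lemma Sr_cocycle (ν μ : ℝ) (ρ : GT →* GT) (τ : ℂ → ℂ)
    (hequiv : ∀ (g : GT) (z : ℂ), τ (GT.act g z) = GT.act (ρ g) (τ z))
    (γ γ' z : ℂ) :
    Sr ν μ ρ τ γ' (z + γ) + Sr ν μ ρ τ γ z
      = Sr ν μ ρ τ (γ + γ') z + (ν * e2 γ γ' + μ * e2 (psi ρ γ) (psi ρ γ')) := by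
  unfold Sr
  rw [psi_add, tau_shift ρ τ hequiv, e2_add_left, e2_add_left, e2_add_right, e2_add_right]
  ring

lemma Em_cocycle (ν μ : ℝ) (ρ : GT →* GT) (τ : ℂ → ℂ)
    (hequiv : ∀ (g : GT) (z : ℂ), τ (GT.act g z) = GT.act (ρ g) (τ z))
    (γ γ' z : ℂ)
    (hn : ∃ n : ℤ, (1 / Real.pi) * phiRho ν μ (⇑ρ) ⟨1, γ⟩ ⟨1, γ'⟩ = (n : ℝ)) :
    Em ν μ ρ τ (γ + γ') z = Em ν μ ρ τ γ' (z + γ) * Em ν μ ρ τ γ z := by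
  obtain ⟨n, hn⟩ := hn
  have hπ : (Real.pi : ℝ) ≠ 0 := Real.pi_ne_zero
  have hphi : ν * e2 γ γ' + μ * e2 (psi ρ γ) (psi ρ γ') = -(n * Real.pi) := by
    rw [phiRho_eq] at hn
    field_simp at hn
    linarith
  have hr : Sr ν μ ρ τ γ' (z + γ) + Sr ν μ ρ τ γ z
      = Sr ν μ ρ τ (γ + γ') z + -(n * Real.pi) := by
    rw [Sr_cocycle ν μ ρ τ hequiv, hphi]
  rw [Em_eq, Em_eq, Em_eq, ← Complex.exp_add]
  have hrc := congrArg (fun x : ℝ => (x : ℂ)) hr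
  simp only [Complex.ofReal_add, Complex.ofReal_neg, Complex.ofReal_mul,
    Complex.ofReal_intCast] at hrc
  have hexp : 2 * Complex.I * ((Sr ν μ ρ τ (γ + γ') z : ℝ) : ℂ)
      = (2 * Complex.I * ((Sr ν μ ρ τ γ' (z + γ) : ℝ) : ℂ)
          + 2 * Complex.I * ((Sr ν μ ρ τ γ z : ℝ) : ℂ))
        + (n : ℂ) * (2 * (Real.pi : ℂ) * Complex.I) := by
    linear_combination (-2 * Complex.I) * hrc
  rw [hexp, Complex.exp_add, Complex.exp_int_mul_two_pi_mul_I, mul_one]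

/-! ### The lattice -/

/-- The lattice point attached to an integer pair. -/
def Lat (ω₁ ω₂ : ℂ) (p : ℤ × ℤ) : ℂ := (p.1 : ℂ) * ω₁ + (p.2 : ℂ) * ω₂

lemma Lat_add (ω₁ ω₂ : ℂ) (p q : ℤ × ℤ) :
    Lat ω₁ ω₂ (p + q) = Lat ω₁ ω₂ p + Lat ω₁ ω₂ q := by
  simp only [Lat, Prod.fst_add, Prod.snd_add]
  push_cast
  ring

lemma Lat_sub (ω₁ ω₂ : ℂ) (p q : ℤ × ℤ) :
    Lat ω₁ ω₂ (p - q) = Lat ω₁ ω₂ p - Lat ω₁ ω₂ q := by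
  simp only [Lat, Prod.fst_sub, Prod.snd_sub]
  push_cast
  ring

lemma Lat_zero (ω₁ ω₂ : ℂ) : Lat ω₁ ω₂ 0 = 0 := by simp [Lat]

lemma inLattice_Lat (ω₁ ω₂ : ℂ) (p : ℤ × ℤ) : inLattice ω₁ ω₂ (Lat ω₁ ω₂ p) :=
  ⟨p.1, p.2, rfl⟩

lemma inLattice_iff (ω₁ ω₂ γ : ℂ) :
    inLattice ω₁ ω₂ γ ↔ ∃ p : ℤ × ℤ, γ = Lat ω₁ ω₂ p := by
  constructor
  · rintro ⟨m, n, rfl⟩; exact ⟨(m, n), rfl⟩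
  · rintro ⟨p, rfl⟩; exact inLattice_Lat ω₁ ω₂ p

/-- Lower bound on the norm of lattice points. -/
lemma lattice_lower (ω₁ ω₂ : ℂ) (hω : LinearIndependent ℝ ![ω₁, ω₂]) :
    ∃ C : ℝ, 0 ≤ C ∧ ∀ p : ℤ × ℤ, p ≠ 0 → 1 ≤ C * ‖Lat ω₁ ω₂ p‖ := by
  have hcard : Fintype.card (Fin 2) = Module.finrank ℝ ℂ := by
    simp [Complex.finrank_real_complex]
  set bb : Module.Basis (Fin 2) ℝ ℂ := basisOfLinearIndependentOfCardEqFinrank hω hcard with hbb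
  have hb0 : bb 0 = ω₁ := by
    rw [hbb, coe_basisOfLinearIndependentOfCardEqFinrank]; rfl
  have hb1 : bb 1 = ω₂ := by
    rw [hbb, coe_basisOfLinearIndependentOfCardEqFinrank]; rfl
  set T : ℂ →L[ℝ] (Fin 2 → ℝ) := (bb.equivFunL : ℂ ≃L[ℝ] (Fin 2 → ℝ)).toContinuousLinearMap
    with hT
  refine ⟨‖T‖, norm_nonneg _, fun p hp => ?_⟩
  have hrep : Lat ω₁ ω₂ p = ((p.1 : ℝ)) • bb 0 + ((p.2 : ℝ)) • bb 1 := by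
    rw [hb0, hb1]
    simp [Lat, Complex.real_smul]
  have hT0 : T (Lat ω₁ ω₂ p) 0 = (p.1 : ℝ) := by
    have : T (Lat ω₁ ω₂ p) = bb.equivFun (Lat ω₁ ω₂ p) := rfl
    rw [this, hrep]
    simp only [map_add, map_smul, Module.Basis.equivFun_apply, Module.Basis.repr_self, Finsupp.coe_add,
      Finsupp.coe_smul, Pi.add_apply, Pi.smul_apply, Finsupp.single_apply, smul_eq_mul]
    norm_num
  have hT1 : T (Lat ω₁ ω₂ p) 1 = (p.2 : ℝ) := by
    have : T (Lat ω₁ ω₂ p) = bb.equivFun (Lat ω₁ ω₂ p) := rfl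
    rw [this, hrep]
    simp only [map_add, map_smul, Module.Basis.equivFun_apply, Module.Basis.repr_self, Finsupp.coe_add,
      Finsupp.coe_smul, Pi.add_apply, Pi.smul_apply, Finsupp.single_apply, smul_eq_mul]
    norm_num
  have hone : (1 : ℝ) ≤ ‖T (Lat ω₁ ω₂ p)‖ := by
    have hcases : p.1 ≠ 0 ∨ p.2 ≠ 0 := by
      by_contra h
      push_neg at h
      exact hp (Prod.ext h.1 h.2)
    rcases hcases with h | h
    · calc (1 : ℝ) ≤ |(p.1 : ℝ)| := by
            rw [← Int.cast_abs]; exact_mod_cast Int.one_le_abs h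
        _ = ‖T (Lat ω₁ ω₂ p) 0‖ := by rw [hT0, Real.norm_eq_abs]
        _ ≤ ‖T (Lat ω₁ ω₂ p)‖ := norm_le_pi_norm _ 0
    · calc (1 : ℝ) ≤ |(p.2 : ℝ)| := by
            rw [← Int.cast_abs]; exact_mod_cast Int.one_le_abs h
        _ = ‖T (Lat ω₁ ω₂ p) 1‖ := by rw [hT1, Real.norm_eq_abs]
        _ ≤ ‖T (Lat ω₁ ω₂ p)‖ := norm_le_pi_norm _ 1
  exact hone.trans (T.le_opNorm _)

/-! ### Construction of a nonzero mixed form -/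

/-- The building block: a bump at the lattice point `p`, twisted by the multiplier. -/
def gfun (ν μ : ℝ) (ρ : GT →* GT) (τ : ℂ → ℂ) (ω₁ ω₂ : ℂ) (β : ContDiffBump (0 : ℂ))
    (p : ℤ × ℤ) (z : ℂ) : ℂ :=
  Em ν μ ρ τ (Lat ω₁ ω₂ p) (z - Lat ω₁ ω₂ p) * ((β (z - Lat ω₁ ω₂ p) : ℝ) : ℂ)

lemma exists_mixedForm (ν μ : ℝ) (ρ : GT →* GT) (τ : ℂ → ℂ)
    (hτ : ContDiff ℝ (⊤ : ℕ∞) τ)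
    (hequiv : ∀ (g : GT) (z : ℂ), τ (GT.act g z) = GT.act (ρ g) (τ z))
    (ω₁ ω₂ : ℂ) (hω : LinearIndependent ℝ ![ω₁, ω₂])
    (hint : ∀ γ γ' : ℂ, inLattice ω₁ ω₂ γ → inLattice ω₁ ω₂ γ' →
      ∃ n : ℤ, (1 / Real.pi) * phiRho ν μ (⇑ρ) ⟨1, γ⟩ ⟨1, γ'⟩ = (n : ℝ)) :
    ∃ F : ℂ → ℂ, MixedForm ν μ (⇑ρ) τ ω₁ ω₂ F ∧ F ≠ 0 := by
  obtain ⟨C, hC0, hC⟩ := lattice_lower ω₁ ω₂ hω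
  obtain ⟨r, hrpos, hr4⟩ : ∃ r : ℝ, 0 < r ∧ ∀ x : ℝ, 1 ≤ C * x → 4 * r < x := by
    refine ⟨1 / (5 * (C + 1)), by positivity, fun x hx => ?_⟩
    have hCpos : 0 < C := by
      rcases eq_or_lt_of_le hC0 with h | h
      · rw [← h, zero_mul] at hx; linarith
      · exact h
    have hx' : 1 / C ≤ x := by
      rw [div_le_iff₀ hCpos]; linarith [hx]
    calc 4 * (1 / (5 * (C + 1))) = 4 / (5 * (C + 1)) := by ring
      _ < 1 / C := by
          rw [div_lt_div_iff₀ (by positivity) hCpos]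
          linarith
      _ ≤ x := hx'
  obtain ⟨β, hβIn, hβOut⟩ :
      ∃ β : ContDiffBump (0 : ℂ), β.rIn = r / 2 ∧ β.rOut = r :=
    ⟨⟨r / 2, r, half_pos hrpos, half_lt_self hrpos⟩, rfl, rfl⟩
  have hβ_zero : ∀ x : ℂ, ¬ ‖x‖ < r → β x = 0 := by
    intro x hx
    by_contra h
    have hmem : x ∈ Function.support (⇑β) := Function.mem_support.mpr h
    rw [β.support_eq, hβOut] at hmem
    exact hx (mem_ball_zero_iff.mp hmem)
  have hg_zero : ∀ (p : ℤ × ℤ) (z : ℂ), ¬ ‖z - Lat ω₁ ω₂ p‖ < r →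
      gfun ν μ ρ τ ω₁ ω₂ β p z = 0 := by
    intro p z h
    unfold gfun
    rw [hβ_zero _ h]
    simp
  have hsep : ∀ p q : ℤ × ℤ, p ≠ q → 4 * r < ‖Lat ω₁ ω₂ p - Lat ω₁ ω₂ q‖ := by
    intro p q hpq
    refine hr4 _ ?_
    rw [← Lat_sub]
    exact hC _ (sub_ne_zero.mpr hpq)
  have huniq : ∀ (z : ℂ) (p q : ℤ × ℤ), ‖z - Lat ω₁ ω₂ p‖ < 2 * r →
      ‖z - Lat ω₁ ω₂ q‖ < 2 * r → p = q := by
    intro z p q h1 h2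
    by_contra hpq
    have h3 := hsep p q hpq
    have h4 : ‖Lat ω₁ ω₂ p - Lat ω₁ ω₂ q‖ ≤ ‖z - Lat ω₁ ω₂ q‖ + ‖z - Lat ω₁ ω₂ p‖ := by
      have he : Lat ω₁ ω₂ p - Lat ω₁ ω₂ q = (z - Lat ω₁ ω₂ q) - (z - Lat ω₁ ω₂ p) := by ring
      rw [he]
      exact norm_sub_le _ _
    linarith
  -- smoothness of each building block
  have hlin : ∀ c : ℂ, ContDiff ℝ (⊤ : ℕ∞) (fun w : ℂ => e2 w c) := by
    intro c
    show ContDiff ℝ (⊤ : ℕ∞) fun w : ℂ => Complex.imCLM (w * (starRingEnd ℂ) c)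
    exact Complex.imCLM.contDiff.comp (contDiff_id.mul contDiff_const)
  have hgsm : ∀ p : ℤ × ℤ, ContDiff ℝ (⊤ : ℕ∞) (gfun ν μ ρ τ ω₁ ω₂ β p) := by
    intro p
    unfold gfun
    refine ContDiff.mul ?_ ?_
    · have heq : (fun z : ℂ => Em ν μ ρ τ (Lat ω₁ ω₂ p) (z - Lat ω₁ ω₂ p))
          = fun z : ℂ =>
              Complex.exp (2 * Complex.I *
                ((Sr ν μ ρ τ (Lat ω₁ ω₂ p) (z - Lat ω₁ ω₂ p) : ℝ) : ℂ)) :=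
        funext fun z => Em_eq ν μ ρ τ _ _
      rw [heq]
      refine Complex.contDiff_exp.comp (contDiff_const.mul (Complex.ofRealCLM.contDiff.comp ?_))
      refine ContDiff.add (contDiff_const.mul ?_) (contDiff_const.mul ?_)
      · exact (hlin _).comp (contDiff_id.sub contDiff_const)
      · exact (hlin _).comp (hτ.comp (contDiff_id.sub contDiff_const))
    · exact Complex.ofRealCLM.contDiff.comp (β.contDiff.comp (contDiff_id.sub contDiff_const))
  -- smoothness of the sum
  have hFsm : ContDiff ℝ (⊤ : ℕ∞) (fun z : ℂ => ∑' p : ℤ × ℤ, gfun ν μ ρ τ ω₁ ω₂ β p z) := by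
    rw [contDiff_iff_contDiffAt]
    intro z₀
    by_cases hex : ∃ p₀ : ℤ × ℤ, ‖z₀ - Lat ω₁ ω₂ p₀‖ < 2 * r
    · obtain ⟨p₀, hp₀⟩ := hex
      have hloc : ∀ z ∈ Metric.ball z₀ r,
          (∑' p : ℤ × ℤ, gfun ν μ ρ τ ω₁ ω₂ β p z) = gfun ν μ ρ τ ω₁ ω₂ β p₀ z := by
        intro z hz
        refine tsum_eq_single p₀ fun p hp => ?_
        by_contra hne
        have h1 : ‖z - Lat ω₁ ω₂ p‖ < r := by
          by_contra h
          exact hne (hg_zero p z h)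
        have hz' : ‖z₀ - z‖ < r := by
          rw [← dist_eq_norm, dist_comm]
          exact Metric.mem_ball.mp hz
        have h2 : ‖z₀ - Lat ω₁ ω₂ p‖ < 2 * r := by
          have he : z₀ - Lat ω₁ ω₂ p = (z₀ - z) + (z - Lat ω₁ ω₂ p) := by ring
          have := norm_add_le (z₀ - z) (z - Lat ω₁ ω₂ p)
          rw [← he] at this
          linarith
        exact hp (huniq z₀ p p₀ h2 hp₀)
      exact ((hgsm p₀).contDiffAt).congr_of_eventuallyEq
        (Filter.eventuallyEq_of_mem (Metric.ball_mem_nhds z₀ hrpos) hloc)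
    · push_neg at hex
      have hloc : ∀ z ∈ Metric.ball z₀ r,
          (∑' p : ℤ × ℤ, gfun ν μ ρ τ ω₁ ω₂ β p z) = (fun _ : ℂ => (0 : ℂ)) z := by
        intro z hz
        have hall : ∀ p : ℤ × ℤ, gfun ν μ ρ τ ω₁ ω₂ β p z = 0 := by
          intro p
          refine hg_zero p z ?_
          intro h1
          have hz' : ‖z₀ - z‖ < r := by
            rw [← dist_eq_norm, dist_comm]
            exact Metric.mem_ball.mp hz
          have he : z₀ - Lat ω₁ ω₂ p = (z₀ - z) + (z - Lat ω₁ ω₂ p) := by ring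
          have htri := norm_add_le (z₀ - z) (z - Lat ω₁ ω₂ p)
          rw [← he] at htri
          exact absurd (by linarith : ‖z₀ - Lat ω₁ ω₂ p‖ < 2 * r) (not_lt.mpr (hex p))
        calc (∑' p : ℤ × ℤ, gfun ν μ ρ τ ω₁ ω₂ β p z) = ∑' _p : ℤ × ℤ, (0 : ℂ) :=
              tsum_congr hall
          _ = 0 := tsum_zero
      exact contDiffAt_const.congr_of_eventuallyEq
        (Filter.eventuallyEq_of_mem (Metric.ball_mem_nhds z₀ hrpos) hloc)
  -- functional equation
  have hfeq : ∀ γ : ℂ, inLattice ω₁ ω₂ γ → ∀ z : ℂ,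
      (∑' p : ℤ × ℤ, gfun ν μ ρ τ ω₁ ω₂ β p (z + γ))
        = Em ν μ ρ τ γ z * ∑' p : ℤ × ℤ, gfun ν μ ρ τ ω₁ ω₂ β p z := by
    intro γ hγ z
    obtain ⟨q, rfl⟩ := (inLattice_iff ω₁ ω₂ γ).mp hγ
    have key : ∀ p : ℤ × ℤ, gfun ν μ ρ τ ω₁ ω₂ β (p + q) (z + Lat ω₁ ω₂ q)
        = Em ν μ ρ τ (Lat ω₁ ω₂ q) z * gfun ν μ ρ τ ω₁ ω₂ β p z := by
      intro p
      unfold gfun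
      have harg : z + Lat ω₁ ω₂ q - Lat ω₁ ω₂ (p + q) = z - Lat ω₁ ω₂ p := by
        rw [Lat_add]; ring
      rw [harg, Lat_add]
      have hco := Em_cocycle ν μ ρ τ hequiv (Lat ω₁ ω₂ p) (Lat ω₁ ω₂ q) (z - Lat ω₁ ω₂ p)
        (hint _ _ (inLattice_Lat ω₁ ω₂ p) (inLattice_Lat ω₁ ω₂ q))
      rw [show z - Lat ω₁ ω₂ p + Lat ω₁ ω₂ p = z by ring] at hco
      rw [hco]
      ring
    calc (∑' p : ℤ × ℤ, gfun ν μ ρ τ ω₁ ω₂ β p (z + Lat ω₁ ω₂ q))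
        = ∑' p : ℤ × ℤ, gfun ν μ ρ τ ω₁ ω₂ β (p + q) (z + Lat ω₁ ω₂ q) :=
          ((Equiv.addRight q).tsum_eq _).symm
      _ = ∑' p : ℤ × ℤ, Em ν μ ρ τ (Lat ω₁ ω₂ q) z * gfun ν μ ρ τ ω₁ ω₂ β p z :=
          tsum_congr key
      _ = Em ν μ ρ τ (Lat ω₁ ω₂ q) z * ∑' p : ℤ × ℤ, gfun ν μ ρ τ ω₁ ω₂ β p z :=
          tsum_mul_left
  -- value at the origin
  have hF0 : (∑' p : ℤ × ℤ, gfun ν μ ρ τ ω₁ ω₂ β p 0) = 1 := by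
    have hzero : ∀ p : ℤ × ℤ, p ≠ 0 → gfun ν μ ρ τ ω₁ ω₂ β p 0 = 0 := by
      intro p hp
      refine hg_zero p 0 ?_
      intro hlt
      have h1 := hr4 _ (hC p hp)
      have h2 : ‖(0 : ℂ) - Lat ω₁ ω₂ p‖ = ‖Lat ω₁ ω₂ p‖ := by rw [zero_sub, norm_neg]
      rw [h2] at hlt
      linarith
    rw [tsum_eq_single 0 hzero]
    unfold gfun
    rw [Lat_zero, sub_zero]
    have hβ1 : β (0 : ℂ) = 1 := by
      refine β.one_of_mem_closedBall ?_
      rw [hβIn]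
      simp only [Metric.mem_closedBall, dist_self]
      linarith
    rw [hβ1]
    have hEm1 : Em ν μ ρ τ 0 (0 : ℂ) = 1 := by
      rw [Em_eq]
      have hS : Sr ν μ ρ τ 0 (0 : ℂ) = 0 := by
        unfold Sr
        rw [psi_zero, e2_zero_right, e2_zero_right]
        ring
      rw [hS]
      simp
    rw [hEm1]
    simp
  refine ⟨fun z : ℂ => ∑' p : ℤ × ℤ, gfun ν μ ρ τ ω₁ ω₂ β p z, ⟨hFsm, ?_⟩, ?_⟩
  · intro γ hγ z
    exact hfeq γ hγ z
  · intro h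
    have h0 : (∑' p : ℤ × ℤ, gfun ν μ ρ τ ω₁ ω₂ β p 0) = 0 := congrFun h 0
    rw [hF0] at h0
    exact one_ne_zero h0

end Stmt6




theorem statement6 (ν μ : ℝ) (hν : 0 < ν) (hμ : 0 < μ)
    (ρ : GT →* GT) (τ : ℂ → ℂ) (hτ : ContDiff ℝ (⊤ : ℕ∞) τ)
    (hequiv : ∀ (g : GT) (z : ℂ), τ (GT.act g z) = GT.act (ρ g) (τ z))
    (ω₁ ω₂ : ℂ) (hω : LinearIndependent ℝ ![ω₁, ω₂]) :
    (∃ F : ℂ → ℂ, MixedForm ν μ (⇑ρ) τ ω₁ ω₂ F ∧ F ≠ 0) ↔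
      (∀ γ γ' : ℂ, inLattice ω₁ ω₂ γ → inLattice ω₁ ω₂ γ' →
        ∃ n : ℤ, (1 / Real.pi) * phiRho ν μ (⇑ρ) ⟨1, γ⟩ ⟨1, γ'⟩ = (n : ℝ)) := by
  constructor
  · rintro ⟨F, ⟨hFsm, hFeq⟩, hFne⟩ γ γ' hγ hγ'
    obtain ⟨z₀, hz₀⟩ : ∃ z : ℂ, F z ≠ 0 := by
      by_contra h
      push_neg at h
      exact hFne (funext h)
    have hγγ' : inLattice ω₁ ω₂ (γ + γ') := by
      obtain ⟨m, n, rfl⟩ := hγ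
      obtain ⟨m', n', rfl⟩ := hγ'
      exact ⟨m + m', n + n', by push_cast; ring⟩
    have h1 : F (z₀ + (γ + γ')) = Stmt6.Em ν μ ρ τ (γ + γ') z₀ * F z₀ := hFeq _ hγγ' z₀
    have h2 : F (z₀ + (γ + γ'))
        = Stmt6.Em ν μ ρ τ γ' (z₀ + γ) * (Stmt6.Em ν μ ρ τ γ z₀ * F z₀) := by
      rw [show z₀ + (γ + γ') = z₀ + γ + γ' by ring]
      rw [hFeq γ' hγ' (z₀ + γ), hFeq γ hγ z₀]
      rfl
    have h3 : Stmt6.Em ν μ ρ τ (γ + γ') z₀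
        = Stmt6.Em ν μ ρ τ γ' (z₀ + γ) * Stmt6.Em ν μ ρ τ γ z₀ := by
      have h := h1.symm.trans h2
      rw [← mul_assoc] at h
      exact mul_right_cancel₀ hz₀ h
    rw [Stmt6.Em_eq, Stmt6.Em_eq, Stmt6.Em_eq, ← Complex.exp_add] at h3
    obtain ⟨k, hk⟩ := Complex.exp_eq_exp_iff_exists_int.mp h3
    have hr := Stmt6.Sr_cocycle ν μ ρ τ hequiv γ γ' z₀
    have hrc := congrArg (fun x : ℝ => (x : ℂ)) hr
    simp only [Complex.ofReal_add, Complex.ofReal_mul] at hrc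
    have h2I : (2 * Complex.I : ℂ) ≠ 0 := by simp [Complex.I_ne_zero]
    have hXc : ((ν * Stmt6.e2 γ γ' + μ * Stmt6.e2 (Stmt6.psi ρ γ) (Stmt6.psi ρ γ') : ℝ) : ℂ)
        = ((-(k * Real.pi) : ℝ) : ℂ) := by
      apply mul_left_cancel₀ h2I
      push_cast
      linear_combination -hk - 2 * Complex.I * hrc
    have hX : ν * Stmt6.e2 γ γ' + μ * Stmt6.e2 (Stmt6.psi ρ γ) (Stmt6.psi ρ γ')
        = -(k * Real.pi) := by exact_mod_cast hXc
    refine ⟨k, ?_⟩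
    rw [Stmt6.phiRho_eq, hX, neg_neg]
    have hπ : Real.pi ≠ 0 := Real.pi_ne_zero
    field_simp
  · intro hint
    exact Stmt6.exists_mixedForm ν μ ρ τ hτ hequiv ω₁ ω₂ hω hint
end
end

section
/- For every b ∈ ℂ, the function z ↦ exp(i(φ(z+b) − φ(z)))·exp(−2i((B−ν)·Im⟨z,b⟩ + μ·Im⟨τ(z), ρ([1,b])⁻¹·0⟩)) is constant on ℂ. -/
noncomputable section

open Complex

section Aux

open Complex

private lemma clm_eq_zero (M : ℂ →L[ℝ] ℂ) (h1 : M 1 = 0) (h2 : M Complex.I = 0) : M = 0 := by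
  ext u
  calc M u = M ((u.re : ℝ) • (1:ℂ) + (u.im : ℝ) • Complex.I) := by
        congr 1
        simp [Complex.real_smul, Complex.re_add_im]
  _ = 0 := by rw [map_add, map_smul, map_smul, h1, h2]; simp

private lemma imC_eq (w : ℂ) : ((w.im : ℝ) : ℂ) = ((starRingEnd ℂ) w - w) * Complex.I / 2 := by
  have h : (starRingEnd ℂ) w - w = -(w - (starRingEnd ℂ) w) := by ring
  rw [h, Complex.sub_conj]
  push_cast
  have h2 : Complex.I * Complex.I = -1 := Complex.I_mul_I
  linear_combination ((w.im : ℂ)) * h2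

end Aux

theorem statement8 (ν μ : ℝ) (hν : 0 < ν) (hμ : 0 < μ)
    (ρ : GT →* GT) (τ : ℂ → ℂ) (hτ : ContDiff ℝ (⊤ : ℕ∞) τ)
    (hequiv : ∀ (g : GT) (z : ℂ), τ (GT.act g z) = GT.act (ρ g) (τ z))
    (B : ℝ) (hB : ∀ z : ℂ, Bfun ν μ τ z = B)
    (φ : ℂ → ℝ) (hφs : ContDiff ℝ (⊤ : ℕ∞) φ) (hφ0 : φ 0 = 0)
    (hφ : ∀ z : ℂ, wderivBar (fun w => (φ w : ℂ)) z = -Complex.I * (Sfun ν μ τ z - (B : ℂ) * z))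
    (b : ℂ) :
    ∀ z w : ℂ,
      Complex.exp (Complex.I * ((φ (z + b) - φ z : ℝ) : ℂ)) *
        Complex.exp (-2 * Complex.I *
          (((B - ν) * (herm z b).im + μ * (herm (τ z) (GT.act (ρ ⟨1, b⟩)⁻¹ 0)).im : ℝ) : ℂ)) =
      Complex.exp (Complex.I * ((φ (w + b) - φ w : ℝ) : ℂ)) *
        Complex.exp (-2 * Complex.I *
          (((B - ν) * (herm w b).im + μ * (herm (τ w) (GT.act (ρ ⟨1, b⟩)⁻¹ 0)).im : ℝ) : ℂ)) := by
  -- Set up notation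
  set g : GT := ⟨1, b⟩ with hg
  set χ : ℂ := ((ρ g).a : ℂ) with hχdef
  set ψ : ℂ := (ρ g).b with hψdef
  have hc : GT.act (ρ g)⁻¹ 0 = -((starRingEnd ℂ) χ * ψ) := by
    show (((ρ g).a⁻¹ : Circle) : ℂ) * 0 + -((((ρ g).a⁻¹ : Circle) : ℂ) * (ρ g).b) = _
    rw [Circle.coe_inv_eq_conj]; ring
  set c : ℂ := GT.act (ρ g)⁻¹ 0 with hcdef
  have hχc : χ * (starRingEnd ℂ) χ = 1 := by
    rw [Complex.mul_conj, hχdef]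
    norm_cast
    simp
  have heqz : ∀ u : ℂ, τ (u + b) = χ * τ u + ψ := by
    intro u
    have h := hequiv g u
    have h1 : GT.act g u = u + b := by simp [GT.act, hg]
    have h2 : GT.act (ρ g) (τ u) = χ * τ u + ψ := rfl
    rw [h1, h2] at h
    exact h
  have hτd : Differentiable ℝ τ := hτ.differentiable (by simp)
  have hφd : Differentiable ℝ φ := hφs.differentiable (by simp)
  set E : ℂ → ℂ := fun u => Complex.I * ((φ (u + b) : ℝ) : ℂ) - Complex.I * ((φ u : ℝ) : ℂ)
      - (2 * Complex.I * ((B : ℝ) - (ν : ℝ)) : ℂ) * (((herm u b).im : ℝ) : ℂ)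
      - (2 * Complex.I * (μ : ℝ)) * (((herm (τ u) c).im : ℝ) : ℂ) with hEdef
  have main : ∀ z : ℂ, DifferentiableAt ℝ E z ∧ fderiv ℝ E z = 0 := by
    intro z
    set t : ℂ →L[ℝ] ℂ := fderiv ℝ τ z with ht
    have Fτ : HasFDerivAt τ t z := (hτd z).hasFDerivAt
    set conjL : ℂ →L[ℝ] ℂ := Complex.conjCLE.toContinuousLinearMap with hconjL
    have hconjLa : ∀ u : ℂ, conjL u = (starRingEnd ℂ) u := fun u => rfl
    have Fconj : HasFDerivAt (fun w => (starRingEnd ℂ) (τ w)) (conjL.comp t) z :=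
      (conjL.hasFDerivAt.comp z Fτ).congr_of_eventuallyEq
        (Filter.Eventually.of_forall fun w => rfl)
    -- τ at z + b
    have Fτb : HasFDerivAt τ (χ • (t.comp (ContinuousLinearMap.id ℝ ℂ))) (z + b) := by
      have hzb : z + b - b = z := by ring
      have h0 : HasFDerivAt τ t (z + b - b) := by rw [hzb]; exact Fτ
      have inner : HasFDerivAt (fun u : ℂ => u - b) (ContinuousLinearMap.id ℝ ℂ) (z + b) :=
        (hasFDerivAt_id (z + b)).sub_const b
      have mid2 := ((h0.comp (z + b) inner).const_mul χ).add_const ψ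
      exact mid2.congr_of_eventuallyEq (Filter.Eventually.of_forall fun u => by
        have h3 := heqz (u - b)
        rw [sub_add_cancel] at h3
        simpa [Function.comp] using h3)
    have Fconjb : HasFDerivAt (fun w => (starRingEnd ℂ) (τ w))
        (((starRingEnd ℂ) χ) • ((conjL.comp t).comp (ContinuousLinearMap.id ℝ ℂ))) (z + b) := by
      have hzb : z + b - b = z := by ring
      have h0 : HasFDerivAt (fun w => (starRingEnd ℂ) (τ w)) (conjL.comp t) (z + b - b) := by
        rw [hzb]; exact Fconj
      have inner : HasFDerivAt (fun u : ℂ => u - b) (ContinuousLinearMap.id ℝ ℂ) (z + b) :=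
        (hasFDerivAt_id (z + b)).sub_const b
      have mid2 := ((h0.comp (z + b) inner).const_mul ((starRingEnd ℂ) χ)).add_const
        ((starRingEnd ℂ) ψ)
      exact mid2.congr_of_eventuallyEq (Filter.Eventually.of_forall fun u => by
        have h3 := heqz (u - b)
        rw [sub_add_cancel] at h3
        have h4 : (starRingEnd ℂ) (τ u) = (starRingEnd ℂ) (χ * τ (u - b) + ψ) := by rw [h3]
        simpa [Function.comp, map_add, map_mul] using h4)
    -- φ data
    have Fφ : ∀ x : ℂ, HasFDerivAt (fun w => ((φ w : ℝ) : ℂ))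
        (Complex.ofRealCLM.comp (fderiv ℝ φ x)) x :=
      fun x => Complex.ofRealCLM.hasFDerivAt.comp x (hφd x).hasFDerivAt
    -- the two hypotheses from hφ, in explicit form
    have hA := hφ z
    simp only [wderivBar, Sfun] at hA
    rw [(Fφ z).fderiv, Fconj.fderiv, ← ht] at hA
    simp only [ContinuousLinearMap.comp_apply, Complex.ofRealCLM_apply, hconjLa] at hA
    have hAb := hφ (z + b)
    simp only [wderivBar, Sfun] at hAb
    rw [(Fφ (z + b)).fderiv, Fconjb.fderiv, Fτb.fderiv, heqz z] at hAb
    simp only [ContinuousLinearMap.comp_apply, ContinuousLinearMap.smul_apply,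
      ContinuousLinearMap.id_apply, Complex.ofRealCLM_apply, hconjLa, smul_eq_mul] at hAb
    -- conjugated versions
    have cA := congrArg (starRingEnd ℂ) hA
    have cAb := congrArg (starRingEnd ℂ) hAb
    simp only [map_mul, map_add, map_sub, map_neg, map_one, map_ofNat, map_div₀,
      Complex.conj_conj, Complex.conj_I, Complex.conj_ofReal, map_inv₀] at hA hAb cA cAb
    -- derivative of E at z
    have P1 : HasFDerivAt (fun u : ℂ => ((φ (u + b) : ℝ) : ℂ))
        ((Complex.ofRealCLM.comp (fderiv ℝ φ (z + b))).comp (ContinuousLinearMap.id ℝ ℂ)) z :=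
      (Fφ (z + b)).comp z ((hasFDerivAt_id z).add_const b)
    have P2 := Fφ z
    have P3 : HasFDerivAt (fun u : ℂ => (((herm u b).im : ℝ) : ℂ))
        (Complex.ofRealCLM.comp (Complex.imCLM.comp
          (((starRingEnd ℂ) b) • ContinuousLinearMap.id ℝ ℂ))) z := by
      have h1 : HasFDerivAt (fun u : ℂ => u * (starRingEnd ℂ) b)
          (((starRingEnd ℂ) b) • ContinuousLinearMap.id ℝ ℂ) z :=
        (hasFDerivAt_id z).mul_const ((starRingEnd ℂ) b)
      have h3 := Complex.ofRealCLM.hasFDerivAt.comp z (Complex.imCLM.hasFDerivAt.comp z h1)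
      exact h3.congr_of_eventuallyEq (Filter.Eventually.of_forall fun u => by
        simp [herm, Function.comp])
    have P4 : HasFDerivAt (fun u : ℂ => (((herm (τ u) c).im : ℝ) : ℂ))
        (Complex.ofRealCLM.comp (Complex.imCLM.comp (((starRingEnd ℂ) c) • t))) z := by
      have h1 : HasFDerivAt (fun u : ℂ => τ u * (starRingEnd ℂ) c)
          (((starRingEnd ℂ) c) • t) z := Fτ.mul_const ((starRingEnd ℂ) c)
      have h3 := Complex.ofRealCLM.hasFDerivAt.comp z (Complex.imCLM.hasFDerivAt.comp z h1)
      exact h3.congr_of_eventuallyEq (Filter.Eventually.of_forall fun u => by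
        simp [herm, Function.comp])
    have PE := (((P1.const_mul Complex.I).sub (P2.const_mul Complex.I)).sub
        (P3.const_mul (2 * Complex.I * ((B : ℝ) - (ν : ℝ)) : ℂ))).sub
        (P4.const_mul (2 * Complex.I * (μ : ℝ)))
    have PE' : HasFDerivAt E _ z := PE
    refine ⟨PE'.differentiableAt, ?_⟩
    rw [PE'.fderiv]
    apply clm_eq_zero <;>
    · simp only [ContinuousLinearMap.coe_sub', Pi.sub_apply, ContinuousLinearMap.coe_smul',
        Pi.smul_apply, ContinuousLinearMap.coe_comp', Function.comp_apply,
        ContinuousLinearMap.coe_id', id_eq, Complex.ofRealCLM_apply, Complex.imCLM_apply,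
        smul_eq_mul, mul_one]
      simp only [imC_eq, hc]
      simp only [map_mul, map_add, map_sub, map_neg, map_one, map_ofNat, map_div₀,
        Complex.conj_conj, Complex.conj_I, Complex.conj_ofReal, map_inv₀]
      have hI : Complex.I * Complex.I = -1 := Complex.I_mul_I
      first
      | linear_combination Complex.I * hAb + Complex.I * cAb - Complex.I * hA - Complex.I * cA
          + ((μ : ℂ) * (τ z * (starRingEnd ℂ) (t 1) - (starRingEnd ℂ) (τ z) * t 1)) * hχc
          + ((1 - χ * (starRingEnd ℂ) χ) * (μ : ℂ)
              * (τ z * (starRingEnd ℂ) (t 1) - (starRingEnd ℂ) (τ z) * t 1)) * hI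
      | linear_combination hAb - cAb - hA + cA
          + ((μ : ℂ) * (τ z * (starRingEnd ℂ) (t Complex.I)
              - (starRingEnd ℂ) (τ z) * t Complex.I)) * hχc
          + (Complex.I * ((B : ℂ) - (ν : ℂ)) * (b + (starRingEnd ℂ) b)
              + (1 - χ * (starRingEnd ℂ) χ) * (μ : ℂ)
              * (τ z * (starRingEnd ℂ) (t Complex.I) - (starRingEnd ℂ) (τ z) * t Complex.I)) * hI
  have hconst := is_const_of_fderiv_eq_zero (𝕜 := ℝ) (f := E)
    (fun x => (main x).1) (fun x => (main x).2)
  intro z w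
  have hexp : ∀ u : ℂ,
      Complex.exp (Complex.I * ((φ (u + b) - φ u : ℝ) : ℂ)) *
        Complex.exp (-2 * Complex.I *
          (((B - ν) * (herm u b).im + μ * (herm (τ u) c).im : ℝ) : ℂ)) =
      Complex.exp (E u) := by
    intro u
    rw [← Complex.exp_add]
    congr 1
    rw [hEdef]
    push_cast
    ring
  rw [hexp z, hexp w, hconst z w]
end
end
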